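/- arXiv:2403.13104 — 3 statements merged into one kernel-verified Lean document; each statement's English description precedes it below -/
import Mathlib

section
/- Let λ ∈ ℝ and ρ ∈ (0, 1]. Then for every continuously differentiable compactly supported h : ℝ → ℂ, ∫_ℝ |h(y)|² dy ≤ ρ^{-1} ∫_ℝ |y² - λ| |h(y)|² dy + 8 √ρ ‖h‖_{L²(ℝ)} ‖h'‖_{L²(ℝ)}. -/
open MeasureTheory


lemma agmon (h : ℝ → ℂ) (hreg : ContDiff ℝ 1 h) (hsupp : HasCompactSupport h) (x : ℝ) :
    ‖h x‖ ^ 2 ≤ 2 * Real.sqrt (∫ y : ℝ, ‖h y‖ ^ 2) * Real.sqrt (∫ y : ℝ, ‖deriv h y‖ ^ 2) := by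
  have hc : Continuous h := hreg.continuous
  have hc' : Continuous (deriv h) := hreg.continuous_deriv le_rfl
  have hd : ∀ y : ℝ, HasDerivAt h (deriv h y) y := fun y =>
    ((hreg.differentiable one_ne_zero) y).hasDerivAt
  set φ : ℝ → ℝ := fun y => 2 * ((h y).re * (deriv h y).re + (h y).im * (deriv h y).im) with hφ
  have hφc : Continuous φ := by fun_prop
  -- derivative of the squared norm
  have hg : ∀ y : ℝ, HasDerivAt (fun z => ‖h z‖ ^ 2) (φ y) y := by
    intro y
    have hre : HasDerivAt (fun z => (h z).re) ((deriv h y).re) y :=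
      (Complex.reCLM.hasFDerivAt.comp_hasDerivAt y (hd y))
    have him : HasDerivAt (fun z => (h z).im) ((deriv h y).im) y :=
      (Complex.imCLM.hasFDerivAt.comp_hasDerivAt y (hd y))
    have := ((hre.pow 2).add (him.pow 2))
    have heq : (fun z => (h z).re ^ 2 + (h z).im ^ 2) = fun z => ‖h z‖ ^ 2 := by
      funext z
      rw [Complex.sq_norm, Complex.normSq_apply, pow_two, pow_two]
    rw [show ((fun z => (h z).re) ^ 2 + (fun z => (h z).im) ^ 2) = fun z => ‖h z‖ ^ 2 from heq] at this
    refine this.congr_deriv ?_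
    push_cast
    ring
  -- pointwise bound on φ
  have hφb : ∀ y : ℝ, |φ y| ≤ 2 * (‖h y‖ * ‖deriv h y‖) := by
    intro y
    have : (h y).re * (deriv h y).re + (h y).im * (deriv h y).im
        = ((starRingEnd ℂ) (h y) * deriv h y).re := by
      simp [Complex.mul_re]
    rw [hφ]
    simp only
    rw [abs_mul, abs_two, this]
    have h1 : |((starRingEnd ℂ) (h y) * deriv h y).re| ≤ ‖(starRingEnd ℂ) (h y) * deriv h y‖ :=
      Complex.abs_re_le_norm _
    rw [norm_mul, RCLike.norm_conj] at h1
    nlinarith [h1]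
  -- φ has compact support and is integrable
  have hφsupp : HasCompactSupport φ := by
    apply hsupp.mono
    intro y hy
    simp only [Function.mem_support] at hy ⊢
    intro h0
    exact hy (by simp [hφ, h0])
  have hφint : Integrable φ := hφc.integrable_of_hasCompactSupport hφsupp
  have hbint : Integrable (fun y : ℝ => 2 * (‖h y‖ * ‖deriv h y‖)) := by
    apply Continuous.integrable_of_hasCompactSupport (by fun_prop)
    apply hsupp.mono
    intro y hy
    simp only [Function.mem_support] at hy ⊢
    intro h0
    exact hy (by simp [h0])
  -- Hölder
  have holder : (∫ y : ℝ, ‖h y‖ * ‖deriv h y‖) ≤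
      Real.sqrt (∫ y : ℝ, ‖h y‖ ^ 2) * Real.sqrt (∫ y : ℝ, ‖deriv h y‖ ^ 2) := by
    have hpq : Real.HolderConjugate 2 2 := by constructor <;> norm_num
    have hm1 : MemLp (fun y : ℝ => ‖h y‖) (ENNReal.ofReal 2) :=
      (hc.memLp_of_hasCompactSupport (p := ENNReal.ofReal 2) hsupp).norm
    have hm2 : MemLp (fun y : ℝ => ‖deriv h y‖) (ENNReal.ofReal 2) :=
      (hc'.memLp_of_hasCompactSupport (p := ENNReal.ofReal 2) hsupp.deriv).norm
    have := MeasureTheory.integral_mul_le_Lp_mul_Lq_of_nonneg hpq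
      (Filter.Eventually.of_forall fun y => norm_nonneg (h y))
      (Filter.Eventually.of_forall fun y => norm_nonneg (deriv h y)) hm1 hm2
    calc (∫ y : ℝ, ‖h y‖ * ‖deriv h y‖)
        ≤ (∫ y : ℝ, ‖h y‖ ^ (2:ℝ)) ^ (1/(2:ℝ)) * (∫ y : ℝ, ‖deriv h y‖ ^ (2:ℝ)) ^ (1/(2:ℝ)) := this
      _ = Real.sqrt (∫ y : ℝ, ‖h y‖ ^ 2) * Real.sqrt (∫ y : ℝ, ‖deriv h y‖ ^ 2) := by
          rw [← Real.sqrt_eq_rpow, ← Real.sqrt_eq_rpow]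
          norm_num [show ((2:ℝ)) = ((2:ℕ):ℝ) by norm_num, Real.rpow_natCast]
  -- FTC
  obtain ⟨R, hR0, hRsupp⟩ := hsupp.exists_pos_le_norm
  have hI : 0 ≤ Real.sqrt (∫ y : ℝ, ‖h y‖ ^ 2) := Real.sqrt_nonneg _
  have hJ : 0 ≤ Real.sqrt (∫ y : ℝ, ‖deriv h y‖ ^ 2) := Real.sqrt_nonneg _
  rcases le_or_gt x (-R) with hxR | hxR
  · have hx0 : h x = 0 := hRsupp x (by
      rw [Real.norm_eq_abs, abs_of_nonpos (by linarith)]; linarith)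
    rw [hx0]
    simp only [norm_zero, zero_pow, OfNat.ofNat_ne_zero, ne_eq, not_false_eq_true]
    positivity
  · have hzero : h (-R) = 0 := hRsupp _ (by rw [Real.norm_eq_abs, abs_neg, abs_of_pos hR0])
    have ftc : (∫ y in (-R)..x, φ y) = ‖h x‖ ^ 2 - ‖h (-R)‖ ^ 2 :=
      intervalIntegral.integral_eq_sub_of_hasDerivAt (fun y _ => hg y)
        (hφc.intervalIntegrable _ _)
    have h1 : ‖h x‖ ^ 2 = ∫ y in (-R)..x, φ y := by
      rw [ftc, hzero]; simp
    have h2 : (∫ y in (-R)..x, φ y) ≤ ∫ y in (-R)..x, |φ y| :=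
      le_trans (le_abs_self _) (intervalIntegral.abs_integral_le_integral_abs hxR.le)
    have h3 : (∫ y in (-R)..x, |φ y|) ≤ ∫ y : ℝ, |φ y| := by
      rw [intervalIntegral.integral_of_le hxR.le]
      exact setIntegral_le_integral hφint.abs
        (Filter.Eventually.of_forall fun y => abs_nonneg _)
    have h4 : (∫ y : ℝ, |φ y|) ≤ ∫ y : ℝ, 2 * (‖h y‖ * ‖deriv h y‖) :=
      integral_mono hφint.abs hbint hφb
    have h5 : (∫ y : ℝ, 2 * (‖h y‖ * ‖deriv h y‖)) = 2 * ∫ y : ℝ, ‖h y‖ * ‖deriv h y‖ :=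
      integral_const_mul 2 _
    rw [mul_assoc]
    rw [h5] at h4
    nlinarith [holder]


lemma meas_bound (lam ρ : ℝ) (hρ0 : 0 < ρ) :
    volume {y : ℝ | |y ^ 2 - lam| ≤ ρ} ≤ ENNReal.ofReal (4 * Real.sqrt ρ) := by
  set a := Real.sqrt (max (lam - ρ) 0) with ha'
  set b := Real.sqrt (lam + ρ) with hb'
  have hsub : {y : ℝ | |y ^ 2 - lam| ≤ ρ} ⊆ Set.Icc (-b) (-a) ∪ Set.Icc a b := by
    intro y hy
    simp only [Set.mem_setOf_eq, abs_le] at hy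
    have h1 : y ^ 2 ≤ lam + ρ := by linarith [hy.2]
    have h2 : max (lam - ρ) 0 ≤ y ^ 2 := max_le (by linarith [hy.1]) (sq_nonneg y)
    have hb : |y| ≤ b := by
      rw [← Real.sqrt_sq_eq_abs]; exact Real.sqrt_le_sqrt h1
    have ha : a ≤ |y| := by
      rw [← Real.sqrt_sq_eq_abs]; exact Real.sqrt_le_sqrt h2
    rcases le_or_gt 0 y with hy0 | hy0
    · right
      exact ⟨by rwa [abs_of_nonneg hy0] at ha, by rwa [abs_of_nonneg hy0] at hb⟩
    · left
      rw [abs_of_neg hy0] at ha hb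
      exact ⟨by linarith, by linarith⟩
  have hanon : 0 ≤ a := Real.sqrt_nonneg _
  have hρs : 0 ≤ Real.sqrt ρ := Real.sqrt_nonneg _
  have hba : b - a ≤ 2 * Real.sqrt ρ := by
    have h1 : lam + ρ ≤ max (lam - ρ) 0 + 4 * ρ * 1 := by
      rcases max_cases (lam - ρ) 0 with ⟨he, _⟩ | ⟨he, hle⟩ <;> rw [he] <;> nlinarith
    have h2 : b ≤ a + 2 * Real.sqrt ρ := by
      rw [hb', Real.sqrt_le_iff]
      constructor
      · positivity
      · have : (a + 2 * Real.sqrt ρ) ^ 2 = a ^ 2 + 4 * (Real.sqrt ρ) ^ 2 + 4 * a * Real.sqrt ρ := by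
          ring
        rw [this, ha', Real.sq_sqrt (le_max_right _ _), Real.sq_sqrt hρ0.le]
        nlinarith [mul_nonneg (mul_nonneg (by norm_num : (0:ℝ) ≤ 4) hanon) hρs]
    linarith
  calc volume {y : ℝ | |y ^ 2 - lam| ≤ ρ}
      ≤ volume (Set.Icc (-b) (-a) ∪ Set.Icc a b) := measure_mono hsub
    _ ≤ volume (Set.Icc (-b) (-a)) + volume (Set.Icc a b) := measure_union_le _ _
    _ = ENNReal.ofReal (-a - -b) + ENNReal.ofReal (b - a) := by
        rw [Real.volume_Icc, Real.volume_Icc]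
    _ ≤ ENNReal.ofReal (2 * Real.sqrt ρ) + ENNReal.ofReal (2 * Real.sqrt ρ) := by
        gcongr <;> linarith
    _ = ENNReal.ofReal (4 * Real.sqrt ρ) := by
        rw [← ENNReal.ofReal_add (by positivity) (by positivity)]
        ring_nf


private theorem stmt_7_aux (lam ρ : ℝ) (hρ0 : 0 < ρ) (hρ1 : ρ ≤ 1)
    (h : ℝ → ℂ) (hreg : ContDiff ℝ 1 h) (hsupp : HasCompactSupport h)
    (agmon : ∀ x : ℝ, ‖h x‖ ^ 2 ≤
      2 * Real.sqrt (∫ y : ℝ, ‖h y‖ ^ 2) * Real.sqrt (∫ y : ℝ, ‖deriv h y‖ ^ 2))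
    (meas_bound : volume {y : ℝ | |y ^ 2 - lam| ≤ ρ} ≤ ENNReal.ofReal (4 * Real.sqrt ρ)) :
    (∫ y : ℝ, ‖h y‖ ^ 2) ≤
      ρ⁻¹ * (∫ y : ℝ, |y ^ 2 - lam| * ‖h y‖ ^ 2) +
        8 * Real.sqrt ρ * Real.sqrt (∫ y : ℝ, ‖h y‖ ^ 2) *
          Real.sqrt (∫ y : ℝ, ‖deriv h y‖ ^ 2) := by
  have hc : Continuous h := hreg.continuous
  set S := {y : ℝ | |y ^ 2 - lam| ≤ ρ} with hS
  have hSm : MeasurableSet S := by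
    apply measurableSet_le (by fun_prop) measurable_const
  have hint : Integrable (fun y : ℝ => ‖h y‖ ^ 2) := by
    apply Continuous.integrable_of_hasCompactSupport (by fun_prop)
    apply hsupp.mono
    intro y hy
    simp only [Function.mem_support] at hy ⊢
    intro h0; exact hy (by simp [h0])
  have hint2 : Integrable (fun y : ℝ => |y ^ 2 - lam| * ‖h y‖ ^ 2) := by
    apply Continuous.integrable_of_hasCompactSupport (by fun_prop)
    apply hsupp.mono
    intro y hy
    simp only [Function.mem_support] at hy ⊢
    intro h0; exact hy (by simp [h0])
  set I := ∫ y : ℝ, ‖h y‖ ^ 2 with hI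
  set J := ∫ y : ℝ, ‖deriv h y‖ ^ 2 with hJ
  have hIs : 0 ≤ Real.sqrt I := Real.sqrt_nonneg _
  have hJs : 0 ≤ Real.sqrt J := Real.sqrt_nonneg _
  set C := 2 * Real.sqrt I * Real.sqrt J with hC
  have hC0 : 0 ≤ C := by positivity
  have hvolfin : volume S < ⊤ := lt_of_le_of_lt meas_bound ENNReal.ofReal_lt_top
  -- integral over S
  have hA : (∫ y in S, ‖h y‖ ^ 2) ≤ C * (4 * Real.sqrt ρ) := by
    have hb : ‖∫ y in S, ‖h y‖ ^ 2‖ ≤ C * (volume S).toReal := by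
      apply norm_setIntegral_le_of_norm_le_const hvolfin
      · intro y _
        rw [Real.norm_eq_abs, abs_of_nonneg (by positivity)]
        exact agmon y
    have hb2 : (volume S).toReal ≤ 4 * Real.sqrt ρ :=
      ENNReal.toReal_le_of_le_ofReal (by positivity) meas_bound
    calc (∫ y in S, ‖h y‖ ^ 2) ≤ ‖∫ y in S, ‖h y‖ ^ 2‖ := le_abs_self _
      _ ≤ C * (volume S).toReal := hb
      _ ≤ C * (4 * Real.sqrt ρ) := by
          apply mul_le_mul_of_nonneg_left hb2 hC0
  -- integral over Sᶜ
  have hB : (∫ y in Sᶜ, ‖h y‖ ^ 2) ≤ ρ⁻¹ * ∫ y : ℝ, |y ^ 2 - lam| * ‖h y‖ ^ 2 := by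
    have step1 : (∫ y in Sᶜ, ‖h y‖ ^ 2) ≤ ∫ y in Sᶜ, ρ⁻¹ * (|y ^ 2 - lam| * ‖h y‖ ^ 2) := by
      apply setIntegral_mono_on hint.integrableOn ((hint2.const_mul ρ⁻¹).integrableOn) hSm.compl
      intro y hy
      simp only [hS, Set.mem_compl_iff, Set.mem_setOf_eq, not_le] at hy
      have key : ρ * ‖h y‖ ^ 2 ≤ |y ^ 2 - lam| * ‖h y‖ ^ 2 :=
        mul_le_mul_of_nonneg_right hy.le (by positivity)
      calc ‖h y‖ ^ 2 = ρ⁻¹ * (ρ * ‖h y‖ ^ 2) := by field_simp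
        _ ≤ ρ⁻¹ * (|y ^ 2 - lam| * ‖h y‖ ^ 2) :=
            mul_le_mul_of_nonneg_left key (by positivity)
    have step2 : (∫ y in Sᶜ, ρ⁻¹ * (|y ^ 2 - lam| * ‖h y‖ ^ 2))
        = ρ⁻¹ * ∫ y in Sᶜ, |y ^ 2 - lam| * ‖h y‖ ^ 2 := integral_const_mul _ _
    have step3 : (∫ y in Sᶜ, |y ^ 2 - lam| * ‖h y‖ ^ 2)
        ≤ ∫ y : ℝ, |y ^ 2 - lam| * ‖h y‖ ^ 2 :=
      setIntegral_le_integral hint2 (Filter.Eventually.of_forall fun y => by positivity)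
    calc (∫ y in Sᶜ, ‖h y‖ ^ 2) ≤ _ := step1
      _ = _ := step2
      _ ≤ ρ⁻¹ * ∫ y : ℝ, |y ^ 2 - lam| * ‖h y‖ ^ 2 := by
          apply mul_le_mul_of_nonneg_left step3 (inv_nonneg.2 hρ0.le)
  have hsplit : I = (∫ y in S, ‖h y‖ ^ 2) + ∫ y in Sᶜ, ‖h y‖ ^ 2 :=
    (integral_add_compl hSm hint).symm
  have hfinal : C * (4 * Real.sqrt ρ) = 8 * Real.sqrt ρ * Real.sqrt I * Real.sqrt J := by
    rw [hC]; ring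
  linarith [hA, hB, hsplit.le, hsplit.ge, hfinal.le, hfinal.ge]

/-- Spectral gap inequality near a non-degenerate critical point. -/
theorem stmt_7 (lam ρ : ℝ) (hρ0 : 0 < ρ) (hρ1 : ρ ≤ 1)
    (h : ℝ → ℂ) (hreg : ContDiff ℝ 1 h) (hsupp : HasCompactSupport h) :
    (∫ y : ℝ, ‖h y‖ ^ 2) ≤
      ρ⁻¹ * (∫ y : ℝ, |y ^ 2 - lam| * ‖h y‖ ^ 2) +
        8 * Real.sqrt ρ * Real.sqrt (∫ y : ℝ, ‖h y‖ ^ 2) *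
          Real.sqrt (∫ y : ℝ, ‖deriv h y‖ ^ 2) :=
  stmt_7_aux lam ρ hρ0 hρ1 h hreg hsupp (agmon h hreg hsupp) (meas_bound lam ρ hρ0)
end

section
/- For every s ∈ [0, 2] there is a constant C_s such that for all δ > 0, all k ≥ 1/δ, and all y ∈ ℝ: ∫_ℝ k e^{-k|y - z|} (|z| + δ)^{-s} dz ≤ C_s (|y| + δ)^{-s}. -/
open MeasureTheory Set

private lemma integrable_exp_neg_abs_aux : Integrable (fun x : ℝ => Real.exp (-|x|)) := by
  have h1 : IntegrableOn (fun x : ℝ => Real.exp (-|x|)) (Iic (0 : ℝ)) := by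
    refine (integrableOn_exp_Iic 0).congr_fun (fun x hx => ?_) measurableSet_Iic
    rw [abs_of_nonpos (mem_Iic.mp hx), neg_neg]
  have h2 : IntegrableOn (fun x : ℝ => Real.exp (-|x|)) (Ioi (0 : ℝ)) := by
    refine (exp_neg_integrableOn_Ioi 0 one_pos).congr_fun (fun x hx => ?_) measurableSet_Ioi
    simp only [abs_of_pos (mem_Ioi.mp hx), neg_one_mul]
  have := h1.union h2
  rwa [Iic_union_Ioi, integrableOn_univ] at this

private lemma integral_exp_neg_abs_aux : (∫ x : ℝ, Real.exp (-|x|)) = 2 := by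
  rw [integral_comp_abs (f := fun x => Real.exp (-x)), integral_exp_neg_Ioi_zero, mul_one]

private lemma integrable_exp_neg_mul_abs_sub {a : ℝ} (ha : 0 < a) (y : ℝ) :
    Integrable (fun z : ℝ => Real.exp (-(a * |y - z|))) := by
  have h : Integrable (fun x : ℝ => Real.exp (-|a * x|)) := by
    exact (integrable_comp_mul_left_iff (g := fun x : ℝ => Real.exp (-|x|)) ha.ne').mpr
      integrable_exp_neg_abs_aux
  have h2 : Integrable (fun x : ℝ => Real.exp (-(a * |x|))) := by
    refine h.congr (Filter.Eventually.of_forall fun x => ?_)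
    show Real.exp (-|a * x|) = Real.exp (-(a * |x|))
    rw [abs_mul, abs_of_pos ha]
  simpa using h2.comp_sub_left y

private lemma integral_exp_neg_mul_abs_sub {a : ℝ} (ha : 0 < a) (y : ℝ) :
    (∫ z : ℝ, Real.exp (-(a * |y - z|))) = 2 / a := by
  have h1 : (∫ z : ℝ, Real.exp (-(a * |y - z|)))
      = ∫ z : ℝ, Real.exp (-(a * |z|)) :=
    integral_sub_left_eq_self (fun u : ℝ => Real.exp (-(a * |u|))) volume y
  have h2 : (∫ z : ℝ, Real.exp (-(a * |z|))) = ∫ z : ℝ, Real.exp (-|a * z|) := by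
    congr 1; ext z; rw [abs_mul, abs_of_pos ha]
  have h3 : (∫ z : ℝ, Real.exp (-|a * z|)) = |a⁻¹| • ∫ z : ℝ, Real.exp (-|z|) :=
    Measure.integral_comp_mul_left (fun x : ℝ => Real.exp (-|x|)) a
  rw [h1, h2, h3, integral_exp_neg_abs_aux, abs_of_pos (inv_pos.mpr ha), smul_eq_mul]
  field_simp

/-- Convolution with k e^{-k|·|} preserves the weights (|z|+δ)^{-s} when k ≥ 1/δ. -/
theorem stmt_9 (s : ℝ) (hs0 : 0 ≤ s) (hs2 : s ≤ 2) :
    ∃ C : ℝ, 0 < C ∧ ∀ δ : ℝ, 0 < δ → ∀ k : ℝ, 1 / δ ≤ k → ∀ y : ℝ,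
      (∫ z : ℝ, k * Real.exp (-(k * |y - z|)) * (|z| + δ) ^ (-s)) ≤
        C * (|y| + δ) ^ (-s) := by
  refine ⟨64, by norm_num, fun δ hδ k hk y => ?_⟩
  have hk0 : 0 < k := lt_of_lt_of_le (by positivity) hk
  have hkδ : 1 ≤ k * δ := by
    rw [div_le_iff₀ hδ] at hk; linarith [hk]
  have hyδ : 0 < |y| + δ := by positivity
  -- the dominating function
  set g : ℝ → ℝ := fun z => 16 * (k * Real.exp (-(k / 2 * |y - z|))) * (|y| + δ) ^ (-s)
    with hg
  have hgint : Integrable g := by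
    exact (((integrable_exp_neg_mul_abs_sub (by positivity : (0:ℝ) < k / 2) y).const_mul
      k).const_mul 16).mul_const _
  have hpt : ∀ z : ℝ, k * Real.exp (-(k * |y - z|)) * (|z| + δ) ^ (-s) ≤ g z := by
    intro z
    set d := |y - z| with hd
    have hd0 : 0 ≤ d := abs_nonneg _
    set t := k * d with ht
    have ht0 : 0 ≤ t := by positivity
    have hzδ : 0 < |z| + δ := by positivity
    -- step 1 : |y| + δ ≤ (1 + t) * (|z| + δ)
    have key : |y| + δ ≤ (1 + t) * (|z| + δ) := by
      have h1 : |y| ≤ |z| + d := by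
        have := abs_sub_abs_le_abs_sub y z
        rw [← hd] at this; linarith
      have h2 : d ≤ t * δ := by
        have : 1 * d ≤ (k * δ) * d := by
          apply mul_le_mul_of_nonneg_right hkδ hd0
        rw [one_mul] at this
        calc d ≤ k * δ * d := this
          _ = t * δ := by ring
      nlinarith [abs_nonneg z]
    -- step 2 : (|z|+δ)^(-s) ≤ (1+t)^s * (|y|+δ)^(-s)
    have h1t : (0:ℝ) < 1 + t := by linarith
    have step2 : (|z| + δ) ^ (-s) ≤ (1 + t) ^ s * (|y| + δ) ^ (-s) := by
      have hys : (|y| + δ) ^ s ≤ (1 + t) ^ s * (|z| + δ) ^ s := by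
        rw [← Real.mul_rpow h1t.le hzδ.le]
        exact Real.rpow_le_rpow hyδ.le key hs0
      rw [Real.rpow_neg hzδ.le, Real.rpow_neg hyδ.le]
      have hts : (0:ℝ) < (1 + t) ^ s := Real.rpow_pos_of_pos h1t s
      have hzs : (0:ℝ) < (|z| + δ) ^ s := Real.rpow_pos_of_pos hzδ s
      have hyys : (0:ℝ) < (|y| + δ) ^ s := Real.rpow_pos_of_pos hyδ s
      rw [inv_eq_one_div, ← div_eq_mul_inv, div_le_div_iff₀ hzs hyys, one_mul]
      exact hys
    -- step 3 : (1+t)^s ≤ 16 * exp (t/2)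
    have step3 : (1 + t) ^ s ≤ 16 * Real.exp (t / 2) := by
      have e1 : (1 + t) ^ s ≤ (1 + t) ^ (2:ℝ) :=
        Real.rpow_le_rpow_of_exponent_le (by linarith) hs2
      have e2 : (1 + t) ^ (2:ℝ) = (1 + t) ^ (2:ℕ) := by
        rw [show (2:ℝ) = ((2:ℕ):ℝ) by norm_num, Real.rpow_natCast]
      have e3 : 1 + t ≤ 4 * Real.exp (t / 4) := by
        have h := Real.add_one_le_exp (t / 4)
        nlinarith [Real.exp_pos (t / 4)]
      have e4 : (1 + t) ^ (2:ℕ) ≤ (4 * Real.exp (t / 4)) ^ (2:ℕ) :=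
        pow_le_pow_left₀ (by linarith) e3 2
      have e5 : (4 * Real.exp (t / 4)) ^ (2:ℕ) = 16 * Real.exp (t / 2) := by
        have he : Real.exp (t / 4) * Real.exp (t / 4) = Real.exp (t / 2) := by
          rw [← Real.exp_add]; congr 1; ring
        rw [mul_pow, pow_two (Real.exp (t / 4)), he]; norm_num
      calc (1 + t) ^ s ≤ (1 + t) ^ (2:ℝ) := e1
        _ = (1 + t) ^ (2:ℕ) := e2
        _ ≤ (4 * Real.exp (t / 4)) ^ (2:ℕ) := e4
        _ = 16 * Real.exp (t / 2) := e5
    -- combine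
    have hys0 : 0 ≤ (|y| + δ) ^ (-s) := Real.rpow_nonneg hyδ.le _
    have hexp : Real.exp (-(k * d)) * Real.exp (t / 2) = Real.exp (-(k / 2 * d)) := by
      rw [← Real.exp_add]; congr 1; rw [ht]; ring
    calc k * Real.exp (-(k * d)) * (|z| + δ) ^ (-s)
        ≤ k * Real.exp (-(k * d)) * ((1 + t) ^ s * (|y| + δ) ^ (-s)) := by
          apply mul_le_mul_of_nonneg_left step2 (by positivity)
      _ ≤ k * Real.exp (-(k * d)) * (16 * Real.exp (t / 2) * (|y| + δ) ^ (-s)) := by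
          apply mul_le_mul_of_nonneg_left
            (mul_le_mul_of_nonneg_right step3 hys0) (by positivity)
      _ = 16 * (k * (Real.exp (-(k * d)) * Real.exp (t / 2))) * (|y| + δ) ^ (-s) := by
          ring
      _ = g z := by rw [hexp, hg]
  -- integrate the pointwise bound
  have hmono : (∫ z : ℝ, k * Real.exp (-(k * |y - z|)) * (|z| + δ) ^ (-s)) ≤ ∫ z : ℝ, g z := by
    refine integral_mono_of_nonneg (Filter.Eventually.of_forall fun z => ?_) hgint
      (Filter.Eventually.of_forall hpt)
    have : (0:ℝ) ≤ (|z| + δ) ^ (-s) := Real.rpow_nonneg (by positivity) _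
    positivity
  have hgval : (∫ z : ℝ, g z) = 64 * (|y| + δ) ^ (-s) := by
    rw [hg]
    simp only
    rw [integral_mul_const]
    rw [integral_const_mul, integral_const_mul,
      integral_exp_neg_mul_abs_sub (by positivity : (0:ℝ) < k / 2) y]
    rw [show (16:ℝ) * (k * (2 / (k / 2))) = 64 by field_simp; ring]
  linarith [hmono, hgval.le, hgval.ge]
end

section
/- Let c > 0, λ ≤ 0, and let k, α, ε be arbitrary real numbers. Suppose F : ℝ → ℂ is a Schwartz function, set W := F'' - k² F, and assume that ε W''(Y) - α W(Y) - i(c Y²/2 - λ) W(Y) + i c F(Y) = 0 for all Y ∈ ℝ. Then F ≡ 0. -/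
open MeasureTheory Complex Filter SchwartzMap

noncomputable def sD (f : SchwartzMap ℝ ℂ) : SchwartzMap ℝ ℂ := SchwartzMap.derivCLM ℝ ℂ f

lemma mc (z : ℂ) : z * (starRingEnd ℂ) z = ((‖z‖^2 : ℝ) : ℂ) := by
  rw [Complex.mul_conj]
  norm_cast
  simp [Complex.normSq_eq_norm_sq]

lemma bdd (f : SchwartzMap ℝ ℂ) : ∃ C, ∀ x, ‖f x‖ ≤ C :=
  ⟨‖f.toBoundedContinuousFunction‖, fun x => f.toBoundedContinuousFunction.norm_coe_le_norm x⟩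

lemma int_mul (f g : SchwartzMap ℝ ℂ) :
    Integrable (fun x => f x * (starRingEnd ℂ) (g x)) := by
  have hg : Integrable (fun x => (starRingEnd ℂ) (g x)) := by
    refine (g.integrable (μ := volume)).norm.mono'
      ((continuous_star.comp g.continuous).aestronglyMeasurable)
      (Eventually.of_forall fun x => by simp)
  exact hg.bdd_mul f.continuous.aestronglyMeasurable (ae_of_all _ (bdd f).choose_spec)

lemma int_sq (f : SchwartzMap ℝ ℂ) : Integrable (fun x => ‖f x‖ ^ 2) := by
  obtain ⟨C, hC⟩ := bdd f
  refine ((f.integrable (μ := volume)).norm.const_mul C).mono'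
    ((f.continuous.norm.pow 2).aestronglyMeasurable)
    (Eventually.of_forall fun x => ?_)
  have h0 := norm_nonneg (f x)
  rw [Real.norm_of_nonneg (by positivity), pow_two]
  exact mul_le_mul_of_nonneg_right (hC x) h0

lemma int_weight (c lam : ℝ) (f : SchwartzMap ℝ ℂ) :
    Integrable (fun x : ℝ => (c * x ^ 2 / 2 - lam) * ‖f x‖ ^ 2) := by
  obtain ⟨C, hC⟩ := bdd f
  have hC0 : 0 ≤ C := le_trans (norm_nonneg _) (hC 0)
  have h1 : Integrable (fun x : ℝ => (|c| / 2 * C) * (‖x‖ ^ 2 * ‖f x‖)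
      + (|lam| * C) * ‖f x‖) :=
    ((f.integrable_pow_mul volume 2).const_mul _).add
      ((f.integrable (μ := volume)).norm.const_mul _)
  refine h1.mono'
    ((((continuous_const.mul (continuous_pow 2)).div_const 2).sub continuous_const).mul
      (f.continuous.norm.pow 2)).aestronglyMeasurable
    (Eventually.of_forall fun x => ?_)
  have hfx : 0 ≤ ‖f x‖ := norm_nonneg _
  have hsq : ‖f x‖ ^ 2 ≤ C * ‖f x‖ := by
    rw [pow_two]; exact mul_le_mul_of_nonneg_right (hC x) hfx
  have h3 : |(c * x ^ 2 / 2 - lam) * ‖f x‖ ^ 2| ≤ (|c| / 2 * x ^ 2 + |lam|) * ‖f x‖ ^ 2 := by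
    rw [abs_mul, _root_.abs_of_nonneg (by positivity : (0:ℝ) ≤ ‖f x‖ ^ 2)]
    refine mul_le_mul_of_nonneg_right ?_ (by positivity)
    calc |c * x ^ 2 / 2 - lam| ≤ |c * x ^ 2 / 2| + |lam| := abs_sub _ _
      _ = |c| / 2 * x ^ 2 + |lam| := by
          rw [abs_div, abs_mul, _root_.abs_of_nonneg (by positivity : (0:ℝ) ≤ x ^ 2)]
          norm_num
          ring
  rw [Real.norm_eq_abs]
  calc |(c * x ^ 2 / 2 - lam) * ‖f x‖ ^ 2| ≤ (|c| / 2 * x ^ 2 + |lam|) * ‖f x‖ ^ 2 := h3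
    _ ≤ (|c| / 2 * x ^ 2 + |lam|) * (C * ‖f x‖) := by
        exact mul_le_mul_of_nonneg_left hsq (by positivity)
    _ = |c| / 2 * C * (‖x‖ ^ 2 * ‖f x‖) + |lam| * C * ‖f x‖ := by
        rw [Real.norm_eq_abs, _root_.sq_abs]
        ring

lemma int_real (f : ℝ → ℝ) : ∫ x : ℝ, ((f x : ℝ) : ℂ) = ((∫ x : ℝ, f x : ℝ) : ℂ) :=
  integral_ofReal

lemma sparts (f g : SchwartzMap ℝ ℂ) :
    ∫ x, (sD f) x * (starRingEnd ℂ) (g x) = - ∫ x, f x * (starRingEnd ℂ) ((sD g) x) := by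
  have hu : ∀ x : ℝ, HasDerivAt (⇑f) ((sD f) x) x := fun x =>
    f.differentiableAt.hasDerivAt
  have hv : ∀ x : ℝ, HasDerivAt (fun y => (starRingEnd ℂ) (g y))
      ((starRingEnd ℂ) ((sD g) x)) x := fun x =>
    (g.differentiableAt.hasDerivAt).star
  have h := MeasureTheory.integral_mul_deriv_eq_deriv_mul_of_integrable (fun x _ => hu x) (fun x _ => hv x)
    (show Integrable (⇑f * fun x => (starRingEnd ℂ) ((sD g) x)) from int_mul f (sD g))
    (show Integrable (⇑(sD f) * fun x => (starRingEnd ℂ) (g x)) from int_mul (sD f) g)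
    (show Integrable (⇑f * fun x => (starRingEnd ℂ) (g x)) from int_mul f g)
  have h2 : ∫ x, f x * (starRingEnd ℂ) ((sD g) x) = - ∫ x, (sD f) x * (starRingEnd ℂ) (g x) := h
  rw [h2, neg_neg]

/-- Rigidity of the rescaled Orr–Sommerfeld operator around Poiseuille flow. -/
theorem stmt_16 (c lam k α ε : ℝ) (hc : 0 < c) (hlam : lam ≤ 0)
    (F : SchwartzMap ℝ ℂ)
    (heq : ∀ Y : ℝ,
      (ε : ℂ) * deriv (deriv (fun t => deriv (deriv (⇑F)) t - (k : ℂ) ^ 2 * F t)) Y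
        - (α : ℂ) * (deriv (deriv (⇑F)) Y - (k : ℂ) ^ 2 * F Y)
        - Complex.I * ((c * Y ^ 2 / 2 - lam : ℝ) : ℂ) *
            (deriv (deriv (⇑F)) Y - (k : ℂ) ^ 2 * F Y)
        + Complex.I * (c : ℂ) * F Y = 0) :
    ∀ Y, F Y = 0 := by
  set F1 := sD F with hF1def
  set F2 := sD F1 with hF2def
  set W : SchwartzMap ℝ ℂ := F2 - (k:ℂ)^2 • F with hWdef
  set W1 := sD W with hW1def
  set W2 := sD W1 with hW2def
  have heq' : ∀ Y : ℝ, (ε : ℂ) * W2 Y - (α : ℂ) * W Y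
      - Complex.I * ((c * Y ^ 2 / 2 - lam : ℝ) : ℂ) * W Y + Complex.I * (c:ℂ) * F Y = 0 := heq
  have h0 : ∀ Y : ℝ, (ε : ℂ) * (W2 Y * (starRingEnd ℂ) (W Y))
      - (α : ℂ) * (W Y * (starRingEnd ℂ) (W Y))
      - Complex.I * (((c * Y ^ 2 / 2 - lam) * ‖W Y‖ ^ 2 : ℝ) : ℂ)
      + Complex.I * (c:ℂ) * (F Y * (starRingEnd ℂ) (W Y)) = 0 := by
    intro Y
    have h := heq' Y
    have hm := mc (W Y)
    have : ((((c * Y ^ 2 / 2 - lam) * ‖W Y‖ ^ 2 : ℝ)) : ℂ)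
        = ((c * Y ^ 2 / 2 - lam : ℝ) : ℂ) * ((‖W Y‖ ^ 2 : ℝ) : ℂ) := by push_cast; ring
    rw [this, ← hm]
    linear_combination ((starRingEnd ℂ) (W Y)) * h
  -- real integrals
  set a2 : ℝ := ∫ x, ‖W1 x‖^2 with ha2
  set m : ℝ := ∫ x, ‖W x‖^2 with hm
  set b : ℝ := ∫ x : ℝ, (c * x^2/2 - lam) * ‖W x‖^2 with hb
  set d : ℝ := ∫ x, ‖F1 x‖^2 with hd
  set e : ℝ := ∫ x, ‖F x‖^2 with he
  clear_value a2 m b d e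
  -- integrabilities
  have i1 : Integrable (fun x => (ε:ℂ) * (W2 x * (starRingEnd ℂ) (W x))) :=
    (int_mul W2 W).const_mul _
  have i2 : Integrable (fun x => (α:ℂ) * (W x * (starRingEnd ℂ) (W x))) :=
    (int_mul W W).const_mul _
  have i3 : Integrable (fun x : ℝ =>
      Complex.I * (((c * x ^ 2 / 2 - lam) * ‖W x‖ ^ 2 : ℝ) : ℂ)) :=
    ((int_weight c lam W).ofReal).const_mul _
  have i4 : Integrable (fun x => Complex.I * (c:ℂ) * (F x * (starRingEnd ℂ) (W x))) :=
    (int_mul F W).const_mul _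
  -- integral of LHS is zero
  have hzero : ∫ x : ℝ, ((ε : ℂ) * (W2 x * (starRingEnd ℂ) (W x))
      - (α : ℂ) * (W x * (starRingEnd ℂ) (W x))
      - Complex.I * (((c * x ^ 2 / 2 - lam) * ‖W x‖ ^ 2 : ℝ) : ℂ)
      + Complex.I * (c:ℂ) * (F x * (starRingEnd ℂ) (W x))) = 0 := by
    have : (fun x : ℝ => ((ε : ℂ) * (W2 x * (starRingEnd ℂ) (W x))
      - (α : ℂ) * (W x * (starRingEnd ℂ) (W x))
      - Complex.I * (((c * x ^ 2 / 2 - lam) * ‖W x‖ ^ 2 : ℝ) : ℂ)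
      + Complex.I * (c:ℂ) * (F x * (starRingEnd ℂ) (W x)))) = fun _ => (0:ℂ) :=
      funext h0
    rw [this, integral_zero]
  rw [integral_add (f := fun x : ℝ => (ε : ℂ) * (W2 x * (starRingEnd ℂ) (W x))
        - (α : ℂ) * (W x * (starRingEnd ℂ) (W x))
        - Complex.I * (((c * x ^ 2 / 2 - lam) * ‖W x‖ ^ 2 : ℝ) : ℂ))
      (g := fun x : ℝ => Complex.I * (c:ℂ) * (F x * (starRingEnd ℂ) (W x)))
      ((i1.sub i2).sub i3) i4] at hzero
  rw [integral_sub (f := fun x : ℝ => (ε : ℂ) * (W2 x * (starRingEnd ℂ) (W x))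
        - (α : ℂ) * (W x * (starRingEnd ℂ) (W x)))
      (g := fun x : ℝ => Complex.I * (((c * x ^ 2 / 2 - lam) * ‖W x‖ ^ 2 : ℝ) : ℂ))
      (i1.sub i2) i3] at hzero
  rw [integral_sub (f := fun x : ℝ => (ε : ℂ) * (W2 x * (starRingEnd ℂ) (W x)))
      (g := fun x : ℝ => (α : ℂ) * (W x * (starRingEnd ℂ) (W x))) i1 i2] at hzero
  rw [integral_const_mul, integral_const_mul, integral_const_mul, integral_const_mul] at hzero
  -- compute each integral
  have hA : ∫ x, W2 x * (starRingEnd ℂ) (W x) = -(a2:ℂ) := by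
    rw [show W2 = sD W1 from rfl, sparts W1 W]
    rw [show sD W = W1 from rfl]
    simp only [mc]
    rw [int_real, ha2]
  have hM : ∫ x, W x * (starRingEnd ℂ) (W x) = (m:ℂ) := by
    simp only [mc]; rw [int_real, hm]
  have hBr : ∫ x : ℝ, (((c * x ^ 2 / 2 - lam) * ‖W x‖ ^ 2 : ℝ) : ℂ) = (b:ℂ) := by
    rw [int_real, hb]
  have hC1 : ∫ x, F1 x * (starRingEnd ℂ) (F1 x) = (d:ℂ) := by
    simp only [mc]; rw [int_real, hd]
  have hE : ∫ x, F x * (starRingEnd ℂ) (F x) = (e:ℂ) := by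
    simp only [mc]; rw [int_real, he]
  have hCint : ∫ x, F x * (starRingEnd ℂ) (W x) = ((-d - k^2 * e : ℝ) : ℂ) := by
    have hsplit : (fun x => F x * (starRingEnd ℂ) (W x))
        = fun x => F x * (starRingEnd ℂ) (F2 x) - (k:ℂ)^2 * (F x * (starRingEnd ℂ) (F x)) := by
      funext x
      have : W x = F2 x - (k:ℂ)^2 * F x := by
        simp [hWdef, SchwartzMap.sub_apply, SchwartzMap.smul_apply, smul_eq_mul]
      rw [this, map_sub, map_mul]
      simp [Complex.conj_ofReal]
      ring
    rw [hsplit, integral_sub (int_mul F F2) ((int_mul F F).const_mul _),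
      integral_const_mul, hE]
    have h2 : ∫ x, F x * (starRingEnd ℂ) (F2 x) = -(d:ℂ) := by
      have := sparts F F1
      rw [show sD F = F1 from rfl, show sD F1 = F2 from rfl, hC1] at this
      linear_combination this
    rw [h2]
    push_cast
    ring
  -- combine
  clear_value W2 W1 W F2 F1
  rw [hA, hM, hBr, hCint] at hzero
  have him := congrArg Complex.im hzero
  simp only [Complex.add_im, Complex.sub_im, Complex.mul_im, Complex.ofReal_im,
    Complex.ofReal_re, Complex.I_im, Complex.I_re, Complex.neg_im, Complex.neg_re,
    Complex.mul_re, Complex.zero_im] at him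
  ring_nf at him
  -- him should be a real linear relation; now derive d = 0
  have hb0 : 0 ≤ b := by
    rw [hb]
    refine integral_nonneg fun x => mul_nonneg ?_ (by positivity)
    have : (0:ℝ) ≤ c * x^2/2 := by positivity
    linarith
  have he0 : 0 ≤ e := he ▸ integral_nonneg fun x => by positivity
  have hd0 : 0 ≤ d := hd ▸ integral_nonneg fun x => by positivity
  have hk2 : 0 ≤ k^2 := sq_nonneg k
  have hcd : c * d ≤ 0 := by linarith [mul_nonneg (mul_nonneg hc.le hk2) he0]
  have hdz : d = 0 := by
    refine le_antisymm ?_ hd0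
    rcases le_or_gt d 0 with h | h
    · exact h
    · exfalso
      have : 0 < c * d := mul_pos hc h
      linarith
  -- F1 vanishes
  have hF1ae : (fun x => ‖F1 x‖^2) =ᵐ[volume] 0 := by
    rw [← integral_eq_zero_iff_of_nonneg_ae (Eventually.of_forall fun x => by positivity)
      (int_sq F1)]
    exact hdz ▸ hd.symm
  have hF1eq : (fun x : ℝ => ‖F1 x‖^2) = fun _ => (0:ℝ) := by
    exact (Continuous.ae_eq_iff_eq volume (F1.continuous.norm.pow 2) continuous_const).mp hF1ae
  have hderiv0 : ∀ x : ℝ, deriv (⇑F) x = 0 := by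
    intro x
    have := congrFun hF1eq x
    have h2 : ‖F1 x‖ = 0 := by
      have h4 : ‖F1 x‖ ^ 2 = 0 := this
      exact pow_eq_zero_iff two_ne_zero |>.mp h4
    have h3 : F1 x = 0 := norm_eq_zero.mp h2
    rw [hF1def] at h3
    exact h3
  intro Y
  have hconst : ∀ y : ℝ, F y = F Y := fun y =>
    is_const_of_deriv_eq_zero F.differentiable hderiv0 y Y
  have htend : Tendsto (⇑F) (cocompact ℝ) (nhds 0) := zero_at_infty F
  rw [show (⇑F) = fun _ : ℝ => F Y from funext hconst] at htend
  exact tendsto_nhds_unique tendsto_const_nhds htend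
end
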